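/- Let V be a finite-dimensional complex normed vector space, M > 0 a real number, and let N, Λ, C be endomorphisms of V satisfying [N,Λ] = −C. For x > 0 set α(x) = x^{−(M+1)}. Then the quantity exp(α(x)·N) ∘ (x^M·Λ + x⁻¹·C) ∘ exp(−α(x)·N) − α'(x)·N − x^M·Λ has operator norm O(x^{−1−M}) as x → +∞. -/

import Mathlib

open Filter Asymptotics Nat

section AuxExp

set_option linter.unusedSectionVars false

variable {𝔸 : Type*} [NormedRing 𝔸] [NormedAlgebra ℂ 𝔸] [CompleteSpace 𝔸]

lemma sgt_pow_norm_le (hone : ‖(1 : 𝔸)‖ ≤ 1) (A : 𝔸) (n : ℕ) : ‖A ^ n‖ ≤ ‖A‖ ^ n := by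
  cases n with
  | zero => simpa using hone
  | succ m => exact norm_pow_le' A m.succ_pos

lemma sgt_term_le (hone : ‖(1 : 𝔸)‖ ≤ 1) (A : 𝔸) (n : ℕ) :
    ‖(n !⁻¹ : ℂ) • A ^ n‖ ≤ ‖A‖ ^ n / n ! := by
  rw [norm_smul, norm_inv]
  have h1 : ‖((n ! : ℂ))‖ = (n ! : ℝ) := by
    simpa using Complex.norm_natCast (n !)
  rw [h1, div_eq_inv_mul]
  gcongr
  exact sgt_pow_norm_le hone A n

lemma sgt_norm_exp_le (hone : ‖(1 : 𝔸)‖ ≤ 1) (A : 𝔸) :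
    ‖NormedSpace.exp A‖ ≤ Real.exp ‖A‖ := by
  have hs := NormedSpace.exp_series_hasSum_exp' (𝕂 := ℂ) A
  have hr : HasSum (fun n => ‖A‖ ^ n / n !) (Real.exp ‖A‖) := by
    rw [Real.exp_eq_exp_ℝ]
    exact NormedSpace.expSeries_div_hasSum_exp (𝔸 := ℝ) ‖A‖
  rw [← hs.tsum_eq]
  calc ‖∑' n : ℕ, (n !⁻¹ : ℂ) • A ^ n‖
      ≤ ∑' n : ℕ, ‖(n !⁻¹ : ℂ) • A ^ n‖ :=
        norm_tsum_le_tsum_norm (NormedSpace.norm_expSeries_summable' A)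
    _ ≤ ∑' n : ℕ, ‖A‖ ^ n / n ! :=
        Summable.tsum_le_tsum (sgt_term_le hone A) (NormedSpace.norm_expSeries_summable' A) hr.summable
    _ = Real.exp ‖A‖ := hr.tsum_eq

lemma sgt_exp_remainder (A : 𝔸) :
    ‖NormedSpace.exp A - 1 - A‖ ≤ ‖A‖ ^ 2 * Real.exp ‖A‖ := by
  have hs := NormedSpace.exp_series_hasSum_exp' (𝕂 := ℂ) A
  have hr : HasSum (fun n => ‖A‖ ^ n / n !) (Real.exp ‖A‖) := by
    rw [Real.exp_eq_exp_ℝ]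
    exact NormedSpace.expSeries_div_hasSum_exp (𝔸 := ℝ) ‖A‖
  have h2 : HasSum (fun n : ℕ => (((n + 2) !⁻¹ : ℂ)) • A ^ (n + 2))
      (NormedSpace.exp A - 1 - A) := by
    have h := (hasSum_nat_add_iff' (f := fun n : ℕ => (n !⁻¹ : ℂ) • A ^ n) 2).mpr hs
    simpa [Finset.sum_range_succ, sub_sub] using h
  have hterm : ∀ n : ℕ, ‖(((n + 2) !⁻¹ : ℂ)) • A ^ (n + 2)‖ ≤ ‖A‖ ^ 2 * (‖A‖ ^ n / n !) := by
    intro n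
    rw [norm_smul, norm_inv]
    have h1 : ‖(((n + 2) ! : ℂ))‖ = ((n + 2)! : ℝ) := by
      simpa using Complex.norm_natCast ((n + 2)!)
    rw [h1]
    have hp : ‖A ^ (n + 2)‖ ≤ ‖A‖ ^ 2 * ‖A‖ ^ n := by
      calc ‖A ^ (n + 2)‖ ≤ ‖A‖ ^ (n + 2) := norm_pow_le' A n.succ.succ_pos
        _ = ‖A‖ ^ 2 * ‖A‖ ^ n := by ring
    have hfact : ((n ! : ℝ))⁻¹ ≥ (((n + 2)! : ℝ))⁻¹ := by
      apply inv_anti₀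
      · exact_mod_cast n.factorial_pos
      · exact_mod_cast Nat.factorial_le (Nat.le_add_right n 2)
    calc (((n + 2)! : ℝ))⁻¹ * ‖A ^ (n + 2)‖
        ≤ ((n ! : ℝ))⁻¹ * (‖A‖ ^ 2 * ‖A‖ ^ n) := by
          apply mul_le_mul hfact hp (norm_nonneg _)
          positivity
      _ = ‖A‖ ^ 2 * (‖A‖ ^ n / n !) := by ring
  have hmaj : Summable (fun n : ℕ => ‖A‖ ^ 2 * (‖A‖ ^ n / n !)) := hr.summable.mul_left _
  have hns : Summable (fun n : ℕ => ‖(((n + 2) !⁻¹ : ℂ)) • A ^ (n + 2)‖) :=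
    Summable.of_nonneg_of_le (fun n => norm_nonneg _) hterm hmaj
  calc ‖NormedSpace.exp A - 1 - A‖
      = ‖∑' n : ℕ, (((n + 2) !⁻¹ : ℂ)) • A ^ (n + 2)‖ := by rw [h2.tsum_eq]
    _ ≤ ∑' n : ℕ, ‖(((n + 2) !⁻¹ : ℂ)) • A ^ (n + 2)‖ := norm_tsum_le_tsum_norm hns
    _ ≤ ∑' n : ℕ, ‖A‖ ^ 2 * (‖A‖ ^ n / n !) := Summable.tsum_le_tsum hterm hns hmaj
    _ = ‖A‖ ^ 2 * Real.exp ‖A‖ := by rw [tsum_mul_left, hr.tsum_eq]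

end AuxExp

lemma sgt_clm_norm_smul {V : Type*} [NormedAddCommGroup V] [NormedSpace ℂ V]
    (c : ℂ) (T : V →L[ℂ] V) : ‖c • T‖ = ‖c‖ * ‖T‖ := norm_smul c T

set_option maxHeartbeats 1000000 in
/-- the second gauge transformation. If `[N,Λ] = −C` and
`α(x) = x^{−(M+1)}`, then
`exp(α(x)N)∘(x^M Λ + C/x)∘exp(−α(x)N) − α'(x)·N − x^M·Λ = O(x^{−1−M})`
as `x → +∞`. -/
theorem second_gauge_transformation
    (V : Type*) [NormedAddCommGroup V] [NormedSpace ℂ V] [FiniteDimensional ℂ V]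
    (M : ℝ) (hM : 0 < M) (N Λ C : V →L[ℂ] V)
    (hNΛ : N * Λ - Λ * N = -C)
    (α : ℝ → ℝ) (hα : ∀ x : ℝ, α x = x ^ (-(M + 1))) :
    (fun x : ℝ =>
        NormedSpace.exp (((α x : ℝ) : ℂ) • N) *
            (((x ^ M : ℝ) : ℂ) • Λ + ((x⁻¹ : ℝ) : ℂ) • C) *
            NormedSpace.exp (-(((α x : ℝ) : ℂ)) • N) -
          ((deriv α x : ℝ) : ℂ) • N - ((x ^ M : ℝ) : ℂ) • Λ)
      =O[atTop] (fun x : ℝ => x ^ (-1 - M)) := by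
  have hαfun : α = fun y : ℝ => y ^ (-(M + 1)) := funext hα
  have hone : ‖(1 : V →L[ℂ] V)‖ ≤ 1 := by
    rw [ContinuousLinearMap.one_def]; exact ContinuousLinearMap.norm_id_le
  rw [isBigO_iff]
  refine ⟨Real.exp ‖N‖ * (‖N‖ ^ 2 * (‖Λ‖ + ‖C‖)) * Real.exp ‖N‖
      + (1 + ‖N‖) * (‖Λ‖ + ‖C‖) * (‖N‖ ^ 2 * Real.exp ‖N‖)
      + ‖N‖ ^ 2 * (‖Λ‖ + ‖C‖)
      + 2 * ‖N‖ * ‖C‖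
      + (M + 1) * ‖N‖, ?_⟩
  filter_upwards [eventually_ge_atTop (1 : ℝ)] with x hx
  have hx0 : (0 : ℝ) < x := lt_of_lt_of_le one_pos hx
  have hxr0 : (0 : ℝ) ≤ x ^ (-1 - M) := Real.rpow_nonneg hx0.le _
  rw [Real.norm_of_nonneg hxr0, neg_smul]
  set a : ℝ := α x with ha_def
  have ha : a = x ^ (-(M + 1)) := hα x
  have ha0 : 0 ≤ a := ha ▸ Real.rpow_nonneg hx0.le _
  have ha1 : a ≤ 1 := ha ▸ Real.rpow_le_one_of_one_le_of_nonpos hx (by linarith)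
  have hxM0 : (0 : ℝ) ≤ x ^ M := Real.rpow_nonneg hx0.le _
  have hxMge1 : (1 : ℝ) ≤ x ^ M := by
    calc (1 : ℝ) = x ^ (0 : ℝ) := (Real.rpow_zero x).symm
      _ ≤ x ^ M := Real.rpow_le_rpow_of_exponent_le hx hM.le
  have hxinv : x⁻¹ ≤ x ^ M := le_trans (inv_le_one_of_one_le₀ hx) hxMge1
  have hax : a * x ^ M = x⁻¹ := by
    rw [ha, ← Real.rpow_add hx0, show -(M + 1) + M = -1 by ring, Real.rpow_neg_one]
  have hq : a * a * x ^ M = x ^ (-M - 2) := by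
    rw [ha, ← Real.rpow_add hx0, ← Real.rpow_add hx0,
      show -(M + 1) + -(M + 1) + M = -M - 2 by ring]
  have haxi : a * x⁻¹ = x ^ (-M - 2) := by
    rw [ha, ← Real.rpow_neg_one x, ← Real.rpow_add hx0,
      show -(M + 1) + -1 = -M - 2 by ring]
  have hle : x ^ (-M - 2) ≤ x ^ (-1 - M) :=
    Real.rpow_le_rpow_of_exponent_le hx (by linarith)
  have hd : deriv α x = -(M + 1) * x ^ (-M - 2) := by
    rw [hαfun, Real.deriv_rpow_const,
      show -(M + 1) - 1 = -M - 2 by ring]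
  set A : V →L[ℂ] V := ((a : ℝ) : ℂ) • N with hA_def
  set B : V →L[ℂ] V := ((x ^ M : ℝ) : ℂ) • Λ + ((x⁻¹ : ℝ) : ℂ) • C with hB_def
  have hAnorm : ‖A‖ = a * ‖N‖ := by
    rw [hA_def, sgt_clm_norm_smul, Complex.norm_real, Real.norm_of_nonneg ha0]
  have hAN : ‖A‖ ≤ ‖N‖ := by
    rw [hAnorm]; exact mul_le_of_le_one_left (norm_nonneg N) ha1
  have hBnorm : ‖B‖ ≤ x ^ M * (‖Λ‖ + ‖C‖) := by
    calc ‖B‖ ≤ ‖((x ^ M : ℝ) : ℂ) • Λ‖ + ‖((x⁻¹ : ℝ) : ℂ) • C‖ := norm_add_le _ _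
      _ = x ^ M * ‖Λ‖ + x⁻¹ * ‖C‖ := by
          rw [sgt_clm_norm_smul, sgt_clm_norm_smul, Complex.norm_real, Complex.norm_real,
            Real.norm_of_nonneg hxM0, Real.norm_of_nonneg (inv_nonneg.2 hx0.le)]
      _ ≤ x ^ M * ‖Λ‖ + x ^ M * ‖C‖ := by gcongr
      _ = x ^ M * (‖Λ‖ + ‖C‖) := by ring
  set E : V →L[ℂ] V := NormedSpace.exp A with hE_def
  set F : V →L[ℂ] V := NormedSpace.exp (-A) with hF_def
  have hexpF : ‖F‖ ≤ Real.exp ‖N‖ := by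
    refine (sgt_norm_exp_le hone (-A)).trans ?_
    rw [norm_neg]; exact Real.exp_le_exp.2 hAN
  have hE1 : ‖E - 1 - A‖ ≤ a * ‖N‖ * (a * ‖N‖) * Real.exp ‖N‖ := by
    refine (sgt_exp_remainder A).trans ?_
    rw [hAnorm, sq]
    gcongr
    exact mul_le_of_le_one_left (norm_nonneg N) ha1
  have hF1 : ‖F - 1 + A‖ ≤ a * ‖N‖ * (a * ‖N‖) * Real.exp ‖N‖ := by
    have h : F - 1 + A = F - 1 - (-A) := by rw [sub_neg_eq_add]
    rw [h]
    refine (sgt_exp_remainder (-A)).trans ?_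
    rw [norm_neg, hAnorm, sq]
    gcongr
    exact mul_le_of_le_one_left (norm_nonneg N) ha1
  have h1A : ‖1 + A‖ ≤ 1 + ‖N‖ :=
    (norm_add_le _ _).trans (add_le_add hone hAN)
  -- algebraic identity
  have hid1 : E * B * F =
      (E - 1 - A) * B * F + (1 + A) * B * (F - 1 + A) - A * B * A
        + (B + (A * B - B * A)) := by noncomm_ring
  have hNB : N * B - B * N =
      ((x ^ M : ℝ) : ℂ) • (N * Λ - Λ * N) + ((x⁻¹ : ℝ) : ℂ) • (N * C - C * N) := by
    rw [hB_def]
    simp only [mul_add, add_mul, mul_smul_comm, smul_mul_assoc, smul_sub]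
    abel
  have hfact1 : ((a : ℝ) : ℂ) * ((x ^ M : ℝ) : ℂ) = ((x⁻¹ : ℝ) : ℂ) := by
    rw [← Complex.ofReal_mul, hax]
  have hid2 : B + (A * B - B * A) - ((x ^ M : ℝ) : ℂ) • Λ
      = (((a : ℝ) : ℂ) * ((x⁻¹ : ℝ) : ℂ)) • (N * C - C * N) := by
    have hABA : A * B - B * A = ((a : ℝ) : ℂ) • (N * B - B * N) := by
      rw [hA_def]; simp [smul_mul_assoc, mul_smul_comm, smul_sub]
    rw [hABA, hNB, hNΛ, hB_def, smul_add, smul_smul, smul_smul, hfact1]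
    module
  have key : E * B * F - ((deriv α x : ℝ) : ℂ) • N - ((x ^ M : ℝ) : ℂ) • Λ
      = ((E - 1 - A) * B * F + (1 + A) * B * (F - 1 + A) - A * B * A)
        + (((a : ℝ) : ℂ) * ((x⁻¹ : ℝ) : ℂ)) • (N * C - C * N)
        - ((deriv α x : ℝ) : ℂ) • N := by
    rw [hid1, ← hid2]; abel
  rw [key]
  -- individual bounds
  have hT1 : ‖(E - 1 - A) * B * F‖
      ≤ x ^ (-1 - M) * (Real.exp ‖N‖ * (‖N‖ ^ 2 * (‖Λ‖ + ‖C‖)) * Real.exp ‖N‖) := by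
    calc ‖(E - 1 - A) * B * F‖ ≤ ‖(E - 1 - A) * B‖ * ‖F‖ := norm_mul_le _ _
      _ ≤ ‖E - 1 - A‖ * ‖B‖ * ‖F‖ :=
          mul_le_mul_of_nonneg_right (norm_mul_le _ _) (norm_nonneg _)
      _ ≤ (a * ‖N‖ * (a * ‖N‖) * Real.exp ‖N‖) * (x ^ M * (‖Λ‖ + ‖C‖)) * Real.exp ‖N‖ := by
          gcongr
      _ = (Real.exp ‖N‖ * (‖N‖ ^ 2 * (‖Λ‖ + ‖C‖)) * Real.exp ‖N‖) * (a * a * x ^ M) := by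
          ring
      _ ≤ (Real.exp ‖N‖ * (‖N‖ ^ 2 * (‖Λ‖ + ‖C‖)) * Real.exp ‖N‖) * (x ^ (-1 - M)) := by
          rw [hq]; gcongr
      _ = x ^ (-1 - M) * (Real.exp ‖N‖ * (‖N‖ ^ 2 * (‖Λ‖ + ‖C‖)) * Real.exp ‖N‖) := by ring
  have hT2 : ‖(1 + A) * B * (F - 1 + A)‖
      ≤ x ^ (-1 - M) * ((1 + ‖N‖) * (‖Λ‖ + ‖C‖) * (‖N‖ ^ 2 * Real.exp ‖N‖)) := by
    calc ‖(1 + A) * B * (F - 1 + A)‖ ≤ ‖(1 + A) * B‖ * ‖F - 1 + A‖ := norm_mul_le _ _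
      _ ≤ ‖1 + A‖ * ‖B‖ * ‖F - 1 + A‖ :=
          mul_le_mul_of_nonneg_right (norm_mul_le _ _) (norm_nonneg _)
      _ ≤ (1 + ‖N‖) * (x ^ M * (‖Λ‖ + ‖C‖)) * (a * ‖N‖ * (a * ‖N‖) * Real.exp ‖N‖) := by
          gcongr
      _ = ((1 + ‖N‖) * (‖Λ‖ + ‖C‖) * (‖N‖ ^ 2 * Real.exp ‖N‖)) * (a * a * x ^ M) := by ring
      _ ≤ ((1 + ‖N‖) * (‖Λ‖ + ‖C‖) * (‖N‖ ^ 2 * Real.exp ‖N‖)) * (x ^ (-1 - M)) := by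
          rw [hq]; gcongr
      _ = x ^ (-1 - M) * ((1 + ‖N‖) * (‖Λ‖ + ‖C‖) * (‖N‖ ^ 2 * Real.exp ‖N‖)) := by ring
  have hT3 : ‖A * B * A‖ ≤ x ^ (-1 - M) * (‖N‖ ^ 2 * (‖Λ‖ + ‖C‖)) := by
    calc ‖A * B * A‖ ≤ ‖A * B‖ * ‖A‖ := norm_mul_le _ _
      _ ≤ ‖A‖ * ‖B‖ * ‖A‖ :=
          mul_le_mul_of_nonneg_right (norm_mul_le _ _) (norm_nonneg _)
      _ ≤ (a * ‖N‖) * (x ^ M * (‖Λ‖ + ‖C‖)) * (a * ‖N‖) := by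
          rw [hAnorm]; gcongr
      _ = (‖N‖ ^ 2 * (‖Λ‖ + ‖C‖)) * (a * a * x ^ M) := by ring
      _ ≤ (‖N‖ ^ 2 * (‖Λ‖ + ‖C‖)) * (x ^ (-1 - M)) := by rw [hq]; gcongr
      _ = x ^ (-1 - M) * (‖N‖ ^ 2 * (‖Λ‖ + ‖C‖)) := by ring
  have hT4 : ‖(((a : ℝ) : ℂ) * ((x⁻¹ : ℝ) : ℂ)) • (N * C - C * N)‖
      ≤ x ^ (-1 - M) * (2 * ‖N‖ * ‖C‖) := by
    rw [sgt_clm_norm_smul, norm_mul, Complex.norm_real, Complex.norm_real,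
      Real.norm_of_nonneg ha0, Real.norm_of_nonneg (inv_nonneg.2 hx0.le), haxi]
    have hcomm : ‖N * C - C * N‖ ≤ 2 * ‖N‖ * ‖C‖ := by
      calc ‖N * C - C * N‖ ≤ ‖N * C‖ + ‖C * N‖ := norm_sub_le _ _
        _ ≤ ‖N‖ * ‖C‖ + ‖C‖ * ‖N‖ := add_le_add (norm_mul_le _ _) (norm_mul_le _ _)
        _ = 2 * ‖N‖ * ‖C‖ := by ring
    exact mul_le_mul hle hcomm (norm_nonneg _) hxr0
  have hT5 : ‖((deriv α x : ℝ) : ℂ) • N‖ ≤ x ^ (-1 - M) * ((M + 1) * ‖N‖) := by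
    rw [sgt_clm_norm_smul, Complex.norm_real, hd, Real.norm_eq_abs, abs_mul, abs_neg,
      abs_of_nonneg (by linarith : (0 : ℝ) ≤ M + 1),
      abs_of_nonneg (Real.rpow_nonneg hx0.le _)]
    calc (M + 1) * x ^ (-M - 2) * ‖N‖ ≤ (M + 1) * x ^ (-1 - M) * ‖N‖ := by gcongr
      _ = x ^ (-1 - M) * ((M + 1) * ‖N‖) := by ring
  calc ‖((E - 1 - A) * B * F + (1 + A) * B * (F - 1 + A) - A * B * A)
        + (((a : ℝ) : ℂ) * ((x⁻¹ : ℝ) : ℂ)) • (N * C - C * N)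
        - ((deriv α x : ℝ) : ℂ) • N‖
      ≤ ‖(E - 1 - A) * B * F‖ + ‖(1 + A) * B * (F - 1 + A)‖ + ‖A * B * A‖
        + ‖(((a : ℝ) : ℂ) * ((x⁻¹ : ℝ) : ℂ)) • (N * C - C * N)‖
        + ‖((deriv α x : ℝ) : ℂ) • N‖ := by
        refine (norm_sub_le _ _).trans (add_le_add_left ?_ _)
        refine (norm_add_le _ _).trans (add_le_add_left ?_ _)
        refine (norm_sub_le _ _).trans (add_le_add_left ?_ _)
        exact norm_add_le _ _
    _ ≤ x ^ (-1 - M) * (Real.exp ‖N‖ * (‖N‖ ^ 2 * (‖Λ‖ + ‖C‖)) * Real.exp ‖N‖)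
        + x ^ (-1 - M) * ((1 + ‖N‖) * (‖Λ‖ + ‖C‖) * (‖N‖ ^ 2 * Real.exp ‖N‖))
        + x ^ (-1 - M) * (‖N‖ ^ 2 * (‖Λ‖ + ‖C‖))
        + x ^ (-1 - M) * (2 * ‖N‖ * ‖C‖)
        + x ^ (-1 - M) * ((M + 1) * ‖N‖) :=
        add_le_add (add_le_add (add_le_add (add_le_add hT1 hT2) hT3) hT4) hT5
    _ = (Real.exp ‖N‖ * (‖N‖ ^ 2 * (‖Λ‖ + ‖C‖)) * Real.exp ‖N‖
        + (1 + ‖N‖) * (‖Λ‖ + ‖C‖) * (‖N‖ ^ 2 * Real.exp ‖N‖)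
        + ‖N‖ ^ 2 * (‖Λ‖ + ‖C‖)
        + 2 * ‖N‖ * ‖C‖
        + (M + 1) * ‖N‖) * x ^ (-1 - M) := by ring
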